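/- Let V be an (N+1)-dimensional ℂ-linear subspace of ℂ[x]. Let d_1 < d_2 < … < d_{N+1} be the distinct degrees of nonzero elements of V, and let σ_1 < σ_2 < … < σ_{N+1} be the distinct root multiplicities at 0 of nonzero elements of V, and assume σ_1 = 0 and the interleaving d_1 < σ_2 ≤ d_2 < σ_3 ≤ d_3 < ⋯ < σ_{N+1} ≤ d_{N+1}. Then V has a basis Q_1, …, Q_{N+1} such that for every i = 1, …, N+1 the polynomial Q_i has degree d_i and root multiplicity σ_i at 0. -/

import Mathlib

open Polynomial

private lemma linIndep_of_natDegree_inj {n : ℕ} (f : Fin n → Polynomial ℂ)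
    (h0 : ∀ i, f i ≠ 0)
    (hinj : ∀ i j, (f i).natDegree = (f j).natDegree → i = j) :
    LinearIndependent ℂ f := by
  rw [linearIndependent_iff']
  intro s g hsum i hi
  by_contra hgi
  obtain ⟨i0, hi0t, hmax⟩ := Finset.exists_max_image (s.filter fun j => g j ≠ 0)
    (fun j => (f j).natDegree) ⟨i, Finset.mem_filter.2 ⟨hi, hgi⟩⟩
  rw [Finset.mem_filter] at hi0t
  have hc := congrArg (fun p => Polynomial.coeff p ((f i0).natDegree)) hsum
  simp only [Polynomial.finset_sum_coeff, Polynomial.coeff_smul, smul_eq_mul,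
    Polynomial.coeff_zero] at hc
  rw [Finset.sum_eq_single i0] at hc
  · exact hi0t.2 (by
      have hlc : (f i0).coeff (f i0).natDegree ≠ 0 :=
        Polynomial.leadingCoeff_ne_zero.2 (h0 i0)
      exact (mul_eq_zero.1 hc).resolve_right hlc)
  · intro j hj hne
    by_cases hgj : g j = 0
    · simp [hgj]
    · have hjt : j ∈ s.filter fun j => g j ≠ 0 := Finset.mem_filter.2 ⟨hj, hgj⟩
      have hle := hmax j hjt
      have hlt : (f j).natDegree < (f i0).natDegree :=
        lt_of_le_of_ne hle (fun h => hne (hinj j i0 h))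
      rw [Polynomial.coeff_eq_zero_of_natDegree_lt hlt, mul_zero]
  · intro h; exact absurd hi0t.1 h

private lemma linIndep_of_natTrailingDegree_inj {n : ℕ} (f : Fin n → Polynomial ℂ)
    (h0 : ∀ i, f i ≠ 0)
    (hinj : ∀ i j, (f i).natTrailingDegree = (f j).natTrailingDegree → i = j) :
    LinearIndependent ℂ f := by
  rw [linearIndependent_iff']
  intro s g hsum i hi
  by_contra hgi
  obtain ⟨i0, hi0t, hmin⟩ := Finset.exists_min_image (s.filter fun j => g j ≠ 0)
    (fun j => (f j).natTrailingDegree) ⟨i, Finset.mem_filter.2 ⟨hi, hgi⟩⟩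
  rw [Finset.mem_filter] at hi0t
  have hc := congrArg (fun p => Polynomial.coeff p ((f i0).natTrailingDegree)) hsum
  simp only [Polynomial.finset_sum_coeff, Polynomial.coeff_smul, smul_eq_mul,
    Polynomial.coeff_zero] at hc
  rw [Finset.sum_eq_single i0] at hc
  · exact hi0t.2 (by
      have hlc : (f i0).coeff (f i0).natTrailingDegree ≠ 0 :=
        Polynomial.coeff_natTrailingDegree_ne_zero.2 (h0 i0)
      exact (mul_eq_zero.1 hc).resolve_right hlc)
  · intro j hj hne
    by_cases hgj : g j = 0
    · simp [hgj]
    · have hjt : j ∈ s.filter fun j => g j ≠ 0 := Finset.mem_filter.2 ⟨hj, hgj⟩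
      have hle := hmin j hjt
      have hlt : (f i0).natTrailingDegree < (f j).natTrailingDegree :=
        lt_of_le_of_ne hle (fun h => hne (hinj j i0 h.symm))
      rw [Polynomial.coeff_eq_zero_of_lt_natTrailingDegree hlt, mul_zero]
  · intro h; exact absurd hi0t.1 h

/-- Let `V` be an `(N+1)`-dimensional subspace of `ℂ[x]`, let `d_1 < … < d_{N+1}` be
the distinct degrees of nonzero elements of `V` and `σ_1 < … < σ_{N+1}` the distinct
root multiplicities at `0` of nonzero elements of `V`, with `σ_1 = 0` and the
interleaving `d_1 < σ_2 ≤ d_2 < σ_3 ≤ d_3 < ⋯ < σ_{N+1} ≤ d_{N+1}`.  Then `V` has a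
basis `Q_1, …, Q_{N+1}` with `Q_i` of degree `d_i` and root multiplicity `σ_i`
at `0`. -/
theorem adapted_basis_exists (N : ℕ) (V : Submodule ℂ (Polynomial ℂ))
    (hrank : Module.finrank ℂ V = N + 1)
    (dseq σ : Fin (N + 1) → ℕ)
    (hdmono : StrictMono dseq) (hσmono : StrictMono σ)
    (hdset : {k : ℕ | ∃ g ∈ V, g ≠ 0 ∧ g.natDegree = k} = Set.range dseq)
    (hσset : {k : ℕ | ∃ g ∈ V, g ≠ 0 ∧ Polynomial.rootMultiplicity 0 g = k}
      = Set.range σ)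
    (hσ0 : σ 0 = 0)
    (hinter : ∀ i : Fin N, dseq i.castSucc < σ i.succ ∧ σ i.succ ≤ dseq i.succ) :
    ∃ Q : Fin (N + 1) → Polynomial ℂ,
      (∀ i, Q i ∈ V) ∧ LinearIndependent ℂ Q ∧
      Submodule.span ℂ (Set.range Q) = V ∧
      ∀ i, (Q i).natDegree = dseq i ∧ Polynomial.rootMultiplicity 0 (Q i) = σ i := by
  have hVfd : FiniteDimensional ℂ V := FiniteDimensional.of_finrank_pos (by omega)
  -- pick witnesses for each degree and each trailing degree
  have hd_ex : ∀ j : Fin (N+1), ∃ g, g ∈ V ∧ g ≠ 0 ∧ g.natDegree = dseq j := by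
    intro j
    have : dseq j ∈ Set.range dseq := ⟨j, rfl⟩
    rw [← hdset] at this
    obtain ⟨g, hg, h1, h2⟩ := this
    exact ⟨g, hg, h1, h2⟩
  have hσ_ex : ∀ j : Fin (N+1), ∃ g, g ∈ V ∧ g ≠ 0 ∧ g.natTrailingDegree = σ j := by
    intro j
    have : σ j ∈ Set.range σ := ⟨j, rfl⟩
    rw [← hσset] at this
    obtain ⟨g, hg, h1, h2⟩ := this
    exact ⟨g, hg, h1, by rwa [Polynomial.rootMultiplicity_eq_natTrailingDegree'] at h2⟩
  choose P hPV hP0 hPd using hd_ex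
  choose R hRV hR0 hRt using hσ_ex
  -- main claim
  have key : ∀ i : Fin (N+1), ∃ g, g ∈ V ∧ g ≠ 0 ∧ g.natDegree = dseq i ∧
      g.natTrailingDegree = σ i := by
    intro i
    set m := i.1 with hm
    have him : m ≤ N := Nat.lt_succ_iff.1 i.2
    set U : Submodule ℂ (Polynomial ℂ) :=
      Polynomial.degreeLE ℂ (dseq i : WithBot ℕ) ⊓ V with hU
    set W : Submodule ℂ (Polynomial ℂ) :=
      (Ideal.span {(Polynomial.X : Polynomial ℂ) ^ σ i}).restrictScalars ℂ ⊓ V with hW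
    have hUV : U ≤ V := inf_le_right
    have hWV : W ≤ V := inf_le_right
    have hUfd : FiniteDimensional ℂ U := Submodule.finiteDimensional_of_le hUV
    have hWfd : FiniteDimensional ℂ W := Submodule.finiteDimensional_of_le hWV
    -- finrank U ≥ m+1
    have hUge : m + 1 ≤ Module.finrank ℂ U := by
      have hmem : ∀ j : Fin (m+1), P ⟨j.1, by omega⟩ ∈ U := by
        intro j
        refine ⟨Polynomial.mem_degreeLE.2 ?_, hPV _⟩
        have : (P ⟨j.1, by omega⟩).natDegree ≤ dseq i := by
          rw [hPd]
          exact hdmono.monotone (by simp [Fin.le_def]; omega)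
        exact Polynomial.natDegree_le_iff_degree_le.1 this
      set b : Fin (m+1) → U := fun j => ⟨P ⟨j.1, by omega⟩, hmem j⟩ with hb
      have hbi : LinearIndependent ℂ b := by
        have : LinearIndependent ℂ fun j : Fin (m+1) => P ⟨j.1, by omega⟩ := by
          apply linIndep_of_natDegree_inj _ (fun j => hP0 _)
          intro a c hac
          rw [hPd, hPd] at hac
          have := hdmono.injective hac
          exact Fin.ext (by simpa [Fin.ext_iff] using this)
        exact this.of_comp U.subtype
      simpa using hbi.fintype_card_le_finrank
    -- finrank W ≥ N+1-m
    have hWge : N + 1 - m ≤ Module.finrank ℂ W := by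
      have hmem : ∀ j : Fin (N+1-m), R ⟨m + j.1, by omega⟩ ∈ W := by
        intro j
        refine ⟨Ideal.mem_span_singleton.2 (Polynomial.X_pow_dvd_iff.2 ?_), hRV _⟩
        intro d hd
        apply Polynomial.coeff_eq_zero_of_lt_natTrailingDegree
        rw [hRt]
        calc d < σ i := hd
          _ ≤ σ ⟨m + j.1, by omega⟩ := hσmono.monotone (by simp [Fin.le_def]; omega)
      set b : Fin (N+1-m) → W := fun j => ⟨R ⟨m + j.1, by omega⟩, hmem j⟩ with hb
      have hbi : LinearIndependent ℂ b := by
        have : LinearIndependent ℂ fun j : Fin (N+1-m) => R ⟨m + j.1, by omega⟩ := by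
          apply linIndep_of_natTrailingDegree_inj _ (fun j => hR0 _)
          intro a c hac
          rw [hRt, hRt] at hac
          have := hσmono.injective hac
          exact Fin.ext (by simp [Fin.ext_iff] at this; omega)
        exact this.of_comp W.subtype
      simpa using hbi.fintype_card_le_finrank
    -- intersection is nonzero
    have hsup : Module.finrank ℂ (U ⊔ W : Submodule ℂ (Polynomial ℂ)) ≤ N + 1 := by
      rw [← hrank]
      exact Submodule.finrank_mono (sup_le hUV hWV)
    have hinf : 0 < Module.finrank ℂ (U ⊓ W : Submodule ℂ (Polynomial ℂ)) := by
      have := Submodule.finrank_sup_add_finrank_inf_eq U W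
      omega
    have : Nontrivial (U ⊓ W : Submodule ℂ (Polynomial ℂ)) :=
      Module.nontrivial_of_finrank_pos hinf
    obtain ⟨gE, hgne⟩ := exists_ne (0 : (U ⊓ W : Submodule ℂ (Polynomial ℂ)))
    obtain ⟨g, hgm⟩ := gE
    rw [Submodule.mem_inf] at hgm
    obtain ⟨hgU, hgW⟩ := hgm
    have hg0 : g ≠ 0 := fun h => hgne (Subtype.ext h)
    have hgV : g ∈ V := hUV hgU
    -- degree and trailing degree bounds
    have hgdeg : g.natDegree ≤ dseq i :=
      Polynomial.natDegree_le_iff_degree_le.2 (Polynomial.mem_degreeLE.1 hgU.1)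
    have hgtr : σ i ≤ g.natTrailingDegree := by
      have hdvd : (Polynomial.X : Polynomial ℂ) ^ σ i ∣ g :=
        Ideal.mem_span_singleton.1 hgW.1
      exact Polynomial.le_natTrailingDegree hg0 (Polynomial.X_pow_dvd_iff.1 hdvd)
    -- identify indices
    have hdg : g.natDegree ∈ Set.range dseq := by
      rw [← hdset]; exact ⟨g, hgV, hg0, rfl⟩
    obtain ⟨j, hj⟩ := hdg
    have htg : g.natTrailingDegree ∈ Set.range σ := by
      rw [← hσset]
      exact ⟨g, hgV, hg0, by rw [Polynomial.rootMultiplicity_eq_natTrailingDegree']⟩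
    obtain ⟨k, hk⟩ := htg
    have hji : j ≤ i := by
      by_contra h
      push_neg at h
      exact absurd (hj.trans_le hgdeg) (not_le.2 (hdmono h))
    have hik : i ≤ k := by
      by_contra h
      push_neg at h
      exact absurd (hgtr.trans_eq hk.symm) (not_le.2 (hσmono h))
    have hσd : σ k ≤ dseq j := by
      rw [hj, hk]; exact Polynomial.natTrailingDegree_le_natDegree g
    have hkj : k ≤ j := by
      by_contra h
      push_neg at h
      have hjN : j.1 < N := lt_of_lt_of_le (Fin.lt_def.1 h) (Nat.lt_succ_iff.1 k.2)
      have h1 := (hinter ⟨j.1, hjN⟩).1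
      have hcs : (⟨j.1, hjN⟩ : Fin N).castSucc = j := Fin.ext rfl
      have hsc : σ (⟨j.1, hjN⟩ : Fin N).succ ≤ σ k :=
        hσmono.monotone (by simp [Fin.le_def]; omega)
      rw [hcs] at h1
      omega
    have hjei : j = i := le_antisymm hji (le_trans hik hkj)
    have hkei : k = i := le_antisymm (le_trans hkj hji) hik
    exact ⟨g, hgV, hg0, by rw [← hj, hjei], by rw [← hk, hkei]⟩
  choose Q hQV hQ0 hQd hQt using key
  have hQli : LinearIndependent ℂ Q := by
    apply linIndep_of_natDegree_inj _ hQ0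
    intro a c hac
    rw [hQd, hQd] at hac
    exact hdmono.injective hac
  refine ⟨Q, hQV, hQli, ?_, fun i =>
    ⟨hQd i, by rw [Polynomial.rootMultiplicity_eq_natTrailingDegree', hQt]⟩⟩
  have hle : Submodule.span ℂ (Set.range Q) ≤ V := by
    rw [Submodule.span_le]
    rintro _ ⟨i, rfl⟩
    exact hQV i
  apply Submodule.eq_of_le_of_finrank_le hle
  rw [hrank, finrank_span_eq_card hQli]
  simp
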